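/- Let (Ω, 𝔄, μ) be a measure space with finite measure μ, let 𝕂 be ℝ or ℂ, let p, q ≥ 1, c ∈ L^q(Ω, ℝ) and c₀ ≥ 0. Suppose g : Ω × 𝕂^d → 𝕂^n satisfies the Carathéodory conditions (g(x,·) is continuous for μ-a.a. x ∈ Ω and g(·,z) is μ-measurable for every z ∈ 𝕂^d) and the growth estimate |g(x,z)| ≤ c(x) + c₀|z|^{p/q} for μ-a.a. x ∈ Ω and all z ∈ 𝕂^d. Then for every u ∈ L^p(Ω, 𝕂^d) the function 𝒢(u) defined by 𝒢(u)(x) := g(x, u(x)) belongs to L^q(Ω, 𝕂^n) and satisfies ‖𝒢(u)‖_q ≤ ‖c‖_q + c₀ ‖u‖_p^{p/q}. -/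

import Mathlib

open MeasureTheory

/-- well-definedness and boundedness of the Nemytskii operator,
Proposition B.2: under Carathéodory conditions and the growth estimate
`|g(x,z)| ≤ c(x) + c₀|z|^{p/q}`, the substitution operator maps `L^p` into `L^q`
with `‖𝒢(u)‖_q ≤ ‖c‖_q + c₀‖u‖_p^{p/q}`. -/
theorem stmt_2 {𝕂 : Type*} [RCLike 𝕂] {Ω : Type*} [MeasurableSpace Ω]
    (μ : Measure Ω) [IsFiniteMeasure μ] (d n : ℕ)
    (p q : ℝ) (hp : 1 ≤ p) (hq : 1 ≤ q)
    (c : Ω → ℝ) (hc : MemLp c (ENNReal.ofReal q) μ)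
    (c₀ : ℝ) (hc₀ : 0 ≤ c₀)
    (g : Ω → EuclideanSpace 𝕂 (Fin d) → EuclideanSpace 𝕂 (Fin n))
    (hgcont : ∀ᵐ x ∂μ, Continuous (g x))
    (hgmeas : ∀ z : EuclideanSpace 𝕂 (Fin d), StronglyMeasurable fun x => g x z)
    (hgrow : ∀ᵐ x ∂μ, ∀ z : EuclideanSpace 𝕂 (Fin d),
      ‖g x z‖ ≤ c x + c₀ * ‖z‖ ^ (p / q)) :
    ∀ u : Ω → EuclideanSpace 𝕂 (Fin d), MemLp u (ENNReal.ofReal p) μ →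
      MemLp (fun x => g x (u x)) (ENNReal.ofReal q) μ ∧
      (∫ x, ‖g x (u x)‖ ^ q ∂μ) ^ (1 / q) ≤
        (∫ x, |c x| ^ q ∂μ) ^ (1 / q) + c₀ * (∫ x, ‖u x‖ ^ p ∂μ) ^ (1 / q) := by
  borelize (EuclideanSpace 𝕂 (Fin d))
  intro u hu
  have hp0 : (0:ℝ) < p := lt_of_lt_of_le one_pos hp
  have hq0 : (0:ℝ) < q := lt_of_lt_of_le one_pos hq
  set P := ENNReal.ofReal p with hP
  set Q := ENNReal.ofReal q with hQ
  have hQ0 : Q ≠ 0 := by simp [hQ, ENNReal.ofReal_eq_zero, not_le, hq0]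
  have hQt : Q ≠ ⊤ := ENNReal.ofReal_ne_top
  have hQtoReal : Q.toReal = q := ENNReal.toReal_ofReal hq0.le
  -- bad set
  have hbad : μ {x | ¬ (Continuous (g x) ∧
      ∀ z : EuclideanSpace 𝕂 (Fin d), ‖g x z‖ ≤ c x + c₀ * ‖z‖ ^ (p / q))} = 0 := by
    have := hgcont.and hgrow
    rwa [MeasureTheory.ae_iff] at this
  obtain ⟨N, hNsub, hNmeas, hNnull⟩ := exists_measurable_superset_of_null hbad
  have hNc : ∀ᵐ x ∂μ, x ∉ N := by
    rw [MeasureTheory.ae_iff]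
    simpa using hNnull
  -- modified function
  set g' : Ω → EuclideanSpace 𝕂 (Fin d) → EuclideanSpace 𝕂 (Fin n) :=
    fun x z => Set.indicator Nᶜ (fun y => g y z) x with hg'
  have hg'cont : ∀ x, Continuous fun z => g' x z := by
    intro x
    by_cases hx : x ∈ Nᶜ
    · have hx' : ¬ x ∈ {x | ¬ (Continuous (g x) ∧
          ∀ z : EuclideanSpace 𝕂 (Fin d), ‖g x z‖ ≤ c x + c₀ * ‖z‖ ^ (p / q))} :=
        fun h => hx (hNsub h)
      have hcont : Continuous (g x) := (not_not.mp hx').1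
      simpa [hg', Set.indicator_of_mem hx] using hcont
    · simp only [hg', Set.indicator_of_notMem hx]
      exact continuous_const
  have hg'meas : ∀ z, StronglyMeasurable fun x => g' x z := fun z =>
    (hgmeas z).indicator hNmeas.compl
  have hSM : StronglyMeasurable (Function.uncurry fun z x => g' x z) :=
    stronglyMeasurable_uncurry_of_continuous_of_stronglyMeasurable
      (fun x => hg'cont x) hg'meas
  obtain ⟨u', hu'm, hu'eq⟩ := hu.1
  have hSMcomp : StronglyMeasurable fun x => g' x (u' x) := by
    have : (fun x => g' x (u' x)) =
        (Function.uncurry fun z x => g' x z) ∘ fun x => (u' x, x) := rfl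
    rw [this]
    exact hSM.comp_measurable (hu'm.measurable.prodMk measurable_id)
  have haeeq : (fun x => g x (u x)) =ᵐ[μ] fun x => g' x (u' x) := by
    filter_upwards [hNc, hu'eq] with x hxN hxu
    simp [hg', Set.indicator_of_mem (Set.mem_compl hxN), hxu]
  have hGmeas : AEStronglyMeasurable (fun x => g x (u x)) μ :=
    ⟨fun x => g' x (u' x), hSMcomp, haeeq⟩
  -- majorant
  have hPQ : P / (P / Q) = Q := by
    rw [hP, hQ, ← ENNReal.ofReal_div_of_pos hq0, ← ENNReal.ofReal_div_of_pos (by positivity)]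
    congr 1
    field_simp
  have hPQtoReal : (P / Q).toReal = p / q := by
    rw [hP, hQ, ← ENNReal.ofReal_div_of_pos hq0, ENNReal.toReal_ofReal (by positivity)]
  have hu2 : MemLp (fun x => ‖u x‖ ^ (p / q)) Q μ := by
    have := hu.norm_rpow_div (P / Q)
    rwa [hPQ, hPQtoReal] at this
  have hu3 : MemLp (fun x => c₀ * ‖u x‖ ^ (p / q)) Q μ := hu2.const_mul c₀
  have hmaj : MemLp (fun x => c x + c₀ * ‖u x‖ ^ (p / q)) Q μ := hc.add hu3
  have hle : ∀ᵐ x ∂μ, ‖g x (u x)‖ ≤ ‖c x + c₀ * ‖u x‖ ^ (p / q)‖ := by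
    filter_upwards [hgrow] with x hx
    exact (hx (u x)).trans (le_abs_self _)
  have hG : MemLp (fun x => g x (u x)) Q μ := hmaj.of_le hGmeas hle
  refine ⟨hG, ?_⟩
  -- the norm inequality, via eLpNorm
  have h1 : eLpNorm (fun x => g x (u x)) Q μ ≤
      eLpNorm (fun x => c x + c₀ * ‖u x‖ ^ (p / q)) Q μ := eLpNorm_mono_ae hle
  have h2 : eLpNorm (fun x => c x + c₀ * ‖u x‖ ^ (p / q)) Q μ ≤
      eLpNorm c Q μ + eLpNorm (fun x => c₀ * ‖u x‖ ^ (p / q)) Q μ :=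
    eLpNorm_add_le hc.1 hu3.1 (by rw [hQ]; exact ENNReal.one_le_ofReal.mpr hq)
  have h3 : eLpNorm (fun x => c₀ * ‖u x‖ ^ (p / q)) Q μ =
      ENNReal.ofReal c₀ * eLpNorm (fun x => ‖u x‖ ^ (p / q)) Q μ := by
    have := eLpNorm_const_smul (F := ℝ) (𝕜 := ℝ) c₀ (fun x => ‖u x‖ ^ (p / q)) Q μ
    rw [show (fun x => c₀ * ‖u x‖ ^ (p / q)) = c₀ • fun x => ‖u x‖ ^ (p / q) from rfl, this,
      Real.enorm_eq_ofReal hc₀]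
  have eG : eLpNorm (fun x => g x (u x)) Q μ =
      ENNReal.ofReal ((∫ x, ‖g x (u x)‖ ^ q ∂μ) ^ q⁻¹) := by
    rw [hG.eLpNorm_eq_integral_rpow_norm hQ0 hQt, hQtoReal]
  have ec : eLpNorm c Q μ = ENNReal.ofReal ((∫ x, |c x| ^ q ∂μ) ^ q⁻¹) := by
    rw [hc.eLpNorm_eq_integral_rpow_norm hQ0 hQt, hQtoReal]
    simp [Real.norm_eq_abs]
  have eu : eLpNorm (fun x => ‖u x‖ ^ (p / q)) Q μ =
      ENNReal.ofReal ((∫ x, ‖u x‖ ^ p ∂μ) ^ q⁻¹) := by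
    rw [hu2.eLpNorm_eq_integral_rpow_norm hQ0 hQt, hQtoReal]
    congr 2
    refine integral_congr_ae (Filter.Eventually.of_forall fun x => ?_)
    show ‖‖u x‖ ^ (p / q)‖ ^ q = ‖u x‖ ^ p
    rw [Real.norm_eq_abs, abs_of_nonneg (Real.rpow_nonneg (norm_nonneg _) _),
      ← Real.rpow_mul (norm_nonneg _), div_mul_cancel₀ _ hq0.ne']
  have key : ENNReal.ofReal ((∫ x, ‖g x (u x)‖ ^ q ∂μ) ^ q⁻¹) ≤
      ENNReal.ofReal ((∫ x, |c x| ^ q ∂μ) ^ q⁻¹ + c₀ * (∫ x, ‖u x‖ ^ p ∂μ) ^ q⁻¹) := by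
    rw [← eG]
    refine (h1.trans h2).trans ?_
    rw [h3, ec, eu, ← ENNReal.ofReal_mul hc₀, ← ENNReal.ofReal_add (by positivity) (by positivity)]
  have hRnn : (0:ℝ) ≤ (∫ x, |c x| ^ q ∂μ) ^ q⁻¹ + c₀ * (∫ x, ‖u x‖ ^ p ∂μ) ^ q⁻¹ := by
    positivity
  have := (ENNReal.ofReal_le_ofReal_iff hRnn).mp key
  simpa [one_div] using this
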